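/- Let ψ, ψᴰ : ℝ → ℝ be differentiable at q with ψ(q) ≠ 0, let ℓ ∈ ℂ with ψᴰ(q) - i·ℓ·ψ(q) ≠ 0, and let ℏ > 0. Set w = ψᴰ/ψ, β(x) = (w(x) + i·conj(ℓ))/(w(x) - i·ℓ), and let Ω = ψ'(q)ψᴰ(q) - ψ(q)(ψᴰ)'(q) be the Wronskian at q. Then the conjugate momentum p(q) := -(iℏ/2)·β'(q)/β(q) satisfies p(q) = ℏ·(Re ℓ)·Ω / |ψᴰ(q) - i·ℓ·ψ(q)|². -/

import Mathlib

open Complex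

theorem stmt3_key (W w L C H : ℂ) (h1 : w - Complex.I * L ≠ 0) (h2 : w + Complex.I * C ≠ 0) :
    -(Complex.I * H / 2) *
      ((W * (w - Complex.I * L) - (w + Complex.I * C) * W) / (w - Complex.I * L) ^ 2) /
      ((w + Complex.I * C) / (w - Complex.I * L))
    = -(H / 2) * (L + C) * W / ((w - Complex.I * L) * (w + Complex.I * C)) := by
  have e1 : (W * (w - Complex.I * L) - (w + Complex.I * C) * W) / (w - Complex.I * L) ^ 2 /
      ((w + Complex.I * C) / (w - Complex.I * L))
      = (W * (w - Complex.I * L) - (w + Complex.I * C) * W) /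
        ((w - Complex.I * L) * (w + Complex.I * C)) := by
    field_simp
  rw [mul_div_assoc, e1, mul_div_assoc']
  congr 1
  have e2 : W * (w - Complex.I * L) - (w + Complex.I * C) * W = -(Complex.I * (L + C)) * W := by
    ring
  rw [e2]
  linear_combination (H / 2 * (L + C) * W) * Complex.I_mul_I

/-- With `w = ψᴰ/ψ`, `β = (w + i·conj ℓ)/(w - iℓ)` and Wronskian
`Ω = ψ'(q)ψᴰ(q) - ψ(q)(ψᴰ)'(q)`, the conjugate momentum
`p(q) = -(iℏ/2)·β'(q)/β(q)` equals `ℏ·(Re ℓ)·Ω/|ψᴰ(q) - iℓψ(q)|²`. -/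
theorem stmt3 (ψ ψD : ℝ → ℝ) (ψ' ψD' q : ℝ) (ℓ : ℂ) (ℏ : ℝ) (hℏ : 0 < ℏ)
    (hψ : HasDerivAt ψ ψ' q) (hψD : HasDerivAt ψD ψD' q)
    (hψ0 : ψ q ≠ 0)
    (hne : (ψD q : ℂ) - Complex.I * ℓ * (ψ q : ℂ) ≠ 0) :
    -(Complex.I * (ℏ : ℂ) / 2) *
        deriv (fun x : ℝ => (((ψD x / ψ x : ℝ) : ℂ) + Complex.I * (starRingEnd ℂ) ℓ) /
          (((ψD x / ψ x : ℝ) : ℂ) - Complex.I * ℓ)) q /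
        ((((ψD q / ψ q : ℝ) : ℂ) + Complex.I * (starRingEnd ℂ) ℓ) /
          (((ψD q / ψ q : ℝ) : ℂ) - Complex.I * ℓ)) =
      ((ℏ * ℓ.re * (ψ' * ψD q - ψ q * ψD') /
        ‖(ψD q : ℂ) - Complex.I * ℓ * (ψ q : ℂ)‖^2 : ℝ) : ℂ) := by
  have ha : (ψ q : ℂ) ≠ 0 := Complex.ofReal_ne_zero.mpr hψ0
  have hw : HasDerivAt (fun x => ψD x / ψ x)
      ((ψD' * ψ q - ψD q * ψ') / ψ q ^ 2) q := hψD.div hψ hψ0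
  have hwC : HasDerivAt (fun x : ℝ => ((ψD x / ψ x : ℝ) : ℂ))
      (((ψD' * ψ q - ψD q * ψ') / ψ q ^ 2 : ℝ) : ℂ) q := hw.ofReal_comp
  have hwval : ((ψD q / ψ q : ℝ) : ℂ) = (ψD q : ℂ) / (ψ q : ℂ) := by push_cast; ring
  have hfac : (ψD q : ℂ) - Complex.I * ℓ * (ψ q : ℂ)
      = (((ψD q / ψ q : ℝ) : ℂ) - Complex.I * ℓ) * (ψ q : ℂ) := by
    rw [hwval]; field_simp
  have hden_ne : ((ψD q / ψ q : ℝ) : ℂ) - Complex.I * ℓ ≠ 0 := by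
    intro h
    exact hne (by rw [hfac, h, zero_mul])
  have hconj : ((ψD q / ψ q : ℝ) : ℂ) + Complex.I * (starRingEnd ℂ) ℓ
      = (starRingEnd ℂ) (((ψD q / ψ q : ℝ) : ℂ) - Complex.I * ℓ) := by
    simp [map_sub, map_mul, Complex.conj_I, Complex.conj_ofReal]
  have hnum_ne : ((ψD q / ψ q : ℝ) : ℂ) + Complex.I * (starRingEnd ℂ) ℓ ≠ 0 := by
    rw [hconj, starRingEnd_apply, star_ne_zero]
    exact hden_ne
  have hnum : HasDerivAt
      (fun x : ℝ => ((ψD x / ψ x : ℝ) : ℂ) + Complex.I * (starRingEnd ℂ) ℓ)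
      (((ψD' * ψ q - ψD q * ψ') / ψ q ^ 2 : ℝ) : ℂ) q := hwC.add_const _
  have hden : HasDerivAt
      (fun x : ℝ => ((ψD x / ψ x : ℝ) : ℂ) - Complex.I * ℓ)
      (((ψD' * ψ q - ψD q * ψ') / ψ q ^ 2 : ℝ) : ℂ) q := hwC.sub_const _
  have hβ : HasDerivAt (fun x : ℝ => (((ψD x / ψ x : ℝ) : ℂ) + Complex.I * (starRingEnd ℂ) ℓ) /
      (((ψD x / ψ x : ℝ) : ℂ) - Complex.I * ℓ)) _ q := hnum.div hden hden_ne
  rw [hβ.deriv]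
  rw [stmt3_key _ _ _ _ _ hden_ne hnum_ne]
  -- now a pure rational identity (no I·I cancellation needed)
  have hconj2 : (starRingEnd ℂ) ((ψD q : ℂ) - Complex.I * ℓ * (ψ q : ℂ))
      = (ψD q : ℂ) + Complex.I * (starRingEnd ℂ) ℓ * (ψ q : ℂ) := by
    simp [map_sub, map_mul, Complex.conj_I, Complex.conj_ofReal]
  have hne2 : (ψD q : ℂ) + Complex.I * (starRingEnd ℂ) ℓ * (ψ q : ℂ) ≠ 0 := by
    rw [← hconj2, starRingEnd_apply, star_ne_zero]
    exact hne
  have habs2 : (((‖(ψD q : ℂ) - Complex.I * ℓ * (ψ q : ℂ)‖ : ℝ)) : ℂ) ^ 2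
      = ((ψD q : ℂ) - Complex.I * ℓ * (ψ q : ℂ)) *
        ((ψD q : ℂ) + Complex.I * (starRingEnd ℂ) ℓ * (ψ q : ℂ)) := by
    rw [← Complex.ofReal_pow, Complex.sq_norm, ← hconj2]
    exact (Complex.mul_conj _).symm
  have hre : ((ℓ.re : ℝ) : ℂ) = (ℓ + (starRingEnd ℂ) ℓ) / 2 := by
    rw [Complex.add_conj]; push_cast; ring
  have hden_ne' : (ψD q : ℂ) / (ψ q : ℂ) - Complex.I * ℓ ≠ 0 := hwval ▸ hden_ne
  have hnum_ne' : (ψD q : ℂ) / (ψ q : ℂ) + Complex.I * (starRingEnd ℂ) ℓ ≠ 0 := hwval ▸ hnum_ne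
  have hL : ((ψD q : ℂ) / (ψ q : ℂ) - Complex.I * ℓ) *
      ((ψD q : ℂ) / (ψ q : ℂ) + Complex.I * (starRingEnd ℂ) ℓ) ≠ 0 := mul_ne_zero hden_ne' hnum_ne'
  have hR : ((ψD q : ℂ) - Complex.I * ℓ * (ψ q : ℂ)) *
      ((ψD q : ℂ) + Complex.I * (starRingEnd ℂ) ℓ * (ψ q : ℂ)) ≠ 0 := mul_ne_zero hne hne2
  push_cast
  rw [habs2, hre, div_eq_div_iff hL hR]
  field_simp
  ring
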